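/- arXiv:1012.2876 — 4 statements merged into one kernel-verified Lean document; each statement's English description precedes it below -/
import Mathlib

section
/- If x, y, z are purely imaginary unit quaternions satisfying y = x · exp(z·α) for some real α with sin(α) ≠ 0, then z is perpendicular to x (their Euclidean inner product in ℝ³ is zero). -/
/-- If `x`, `y`, `z` are purely imaginary unit quaternions satisfying
`y = x * exp(z * α)` for some real `α` with `sin α ≠ 0`, then `z` is perpendicular to
`x`: their Euclidean inner product in `ℝ³ = span(i,j,k)` is zero.  Here, for a purely
imaginary unit quaternion `z`, `exp (z * α) = cos α + (sin α) • z`. -/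
theorem perp_of_eq_mul_exp (x y z : Quaternion ℝ)
    (hx : x.re = 0) (hy : y.re = 0) (hz : z.re = 0)
    (hx1 : ‖x‖ = 1) (hy1 : ‖y‖ = 1) (hz1 : ‖z‖ = 1)
    (α : ℝ) (hα : Real.sin α ≠ 0)
    (h : y = x * (((Real.cos α : ℝ) : Quaternion ℝ) + (Real.sin α) • z)) :
    z.imI * x.imI + z.imJ * x.imJ + z.imK * x.imK = 0 := by
  have h' := congrArg QuaternionAlgebra.re h
  simp [Quaternion.re_mul, hx, hy, hz] at h'
  have hs : Real.sin α * (z.imI * x.imI + z.imJ * x.imJ + z.imK * x.imK) = 0 := by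
    ring_nf; ring_nf at h'; linarith
  rcases mul_eq_zero.mp hs with h'' | h''
  · exact absurd h'' hα
  · exact h''
end

section
/- Let G be a group, ρ : G → SU(2) a homomorphism, and ξ : G → su(2) a cocycle at ρ, i.e., ξ(gh) = ξ(g) + Ad_{ρ(g)}(ξ(h)) for all g, h ∈ G. If c ∈ G is central and ρ is non-abelian (i.e., there exist g, h with ρ(g)ρ(h) ≠ ρ(h)ρ(g)), then ξ(c) is fixed by Ad_{ρ(g)} for all g. Moreover, if additionally ρ(c) is central in SU(2), then ξ(c) = 0. -/
/-- Pure real-number cross-product lemma: if the imaginary parts of `p` and `q` are both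
parallel to a nonzero vector `(a1,a2,a3)`, then they are parallel to each other. -/
lemma cross_aux (a0 a1 a2 a3 p0 p1 p2 p3 q0 q1 q2 q3 : ℝ)
    (ha : a1 ≠ 0 ∨ a2 ≠ 0 ∨ a3 ≠ 0)
    (hp1 : p0*a1 + p1*a0 + p2*a3 - p3*a2 = a0*p1 + a1*p0 + a2*p3 - a3*p2)
    (hp2 : p0*a2 - p1*a3 + p2*a0 + p3*a1 = a0*p2 - a1*p3 + a2*p0 + a3*p1)
    (hp3 : p0*a3 + p1*a2 - p2*a1 + p3*a0 = a0*p3 + a1*p2 - a2*p1 + a3*p0)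
    (hq1 : q0*a1 + q1*a0 + q2*a3 - q3*a2 = a0*q1 + a1*q0 + a2*q3 - a3*q2)
    (hq2 : q0*a2 - q1*a3 + q2*a0 + q3*a1 = a0*q2 - a1*q3 + a2*q0 + a3*q1)
    (hq3 : q0*a3 + q1*a2 - q2*a1 + q3*a0 = a0*q3 + a1*q2 - a2*q1 + a3*q0) :
    p2*q3 = p3*q2 ∧ p3*q1 = p1*q3 ∧ p1*q2 = p2*q1 := by
  have P1 : p2 * a3 = p3 * a2 := by linear_combination hp1 / 2
  have P2 : p3 * a1 = p1 * a3 := by linear_combination hp2 / 2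
  have P3 : p1 * a2 = p2 * a1 := by linear_combination hp3 / 2
  have Q1 : q2 * a3 = q3 * a2 := by linear_combination hq1 / 2
  have Q2 : q3 * a1 = q1 * a3 := by linear_combination hq2 / 2
  have Q3 : q1 * a2 = q2 * a1 := by linear_combination hq3 / 2
  refine ⟨?_, ?_, ?_⟩
  · rcases ha with h | h | h
    · exact mul_right_cancel₀ h (by linear_combination p2 * Q2 + q1 * P1 + p3 * Q3)
    · exact mul_right_cancel₀ h (by linear_combination q2 * P1 - p2 * Q1)
    · exact mul_right_cancel₀ h (by linear_combination q3 * P1 - p3 * Q1)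
  · rcases ha with h | h | h
    · exact mul_right_cancel₀ h (by linear_combination q1 * P2 - p1 * Q2)
    · exact mul_right_cancel₀ h (by linear_combination p3 * Q3 + q2 * P2 + p1 * Q1)
    · exact mul_right_cancel₀ h (by linear_combination q3 * P2 - p3 * Q2)
  · rcases ha with h | h | h
    · exact mul_right_cancel₀ h (by linear_combination q1 * P3 - p1 * Q3)
    · exact mul_right_cancel₀ h (by linear_combination q2 * P3 - p2 * Q3)
    · exact mul_right_cancel₀ h (by linear_combination p1 * Q1 + q3 * P3 + p2 * Q2)

/-- A quaternion with nonzero imaginary part has commutative centralizer. -/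
lemma comm_of_comm (a p q : Quaternion ℝ)
    (ha : a.imI ≠ 0 ∨ a.imJ ≠ 0 ∨ a.imK ≠ 0)
    (hp : p * a = a * p) (hq : q * a = a * q) : p * q = q * p := by
  have h1 := congrArg QuaternionAlgebra.imI hp
  have h2 := congrArg QuaternionAlgebra.imJ hp
  have h3 := congrArg QuaternionAlgebra.imK hp
  have k1 := congrArg QuaternionAlgebra.imI hq
  have k2 := congrArg QuaternionAlgebra.imJ hq
  have k3 := congrArg QuaternionAlgebra.imK hq
  simp only [Quaternion.imI_mul, Quaternion.imJ_mul, Quaternion.imK_mul] at h1 h2 h3 k1 k2 k3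
  obtain ⟨G1, G2, G3⟩ := cross_aux a.re a.imI a.imJ a.imK p.re p.imI p.imJ p.imK
    q.re q.imI q.imJ q.imK ha h1 h2 h3 k1 k2 k3
  refine Quaternion.ext (a := p * q) (b := q * p) ?_ ?_ ?_ ?_
  · simp only [Quaternion.re_mul]; ring
  · simp only [Quaternion.imI_mul]; linear_combination 2 * G1
  · simp only [Quaternion.imJ_mul]; linear_combination 2 * G2
  · simp only [Quaternion.imK_mul]; linear_combination 2 * G3

/-- Let `ρ : G → SU(2)` be a homomorphism (SU(2) realized as the unit quaternions) and
`ξ : G → su(2)` a cocycle at `ρ` (su(2) realized as the purely imaginary quaternions),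
i.e. `ξ (g*h) = ξ g + Ad_{ρ g} (ξ h)` where `Ad_u v = u * v * u⁻¹`.  If `c ∈ G` is
central and `ρ` is non-abelian, then `ξ c` is fixed by `Ad_{ρ g}` for every `g`;
moreover, if additionally `ρ c` is central in `SU(2)` (i.e. `ρ c = ±1`), then
`ξ c = 0`. -/
theorem cocycle_at_central_element {G : Type*} [Group G]
    (ρ : G →* Quaternion ℝ) (hρ : ∀ g, ‖ρ g‖ = 1)
    (ξ : G → Quaternion ℝ) (hξim : ∀ g, (ξ g).re = 0)
    (hcoc : ∀ g h : G, ξ (g * h) = ξ g + ρ g * ξ h * (ρ g)⁻¹)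
    (c : G) (hc : ∀ g : G, c * g = g * c)
    (hnonab : ∃ g h : G, ρ g * ρ h ≠ ρ h * ρ g) :
    (∀ g : G, ρ g * ξ c * (ρ g)⁻¹ = ξ c) ∧
    ((ρ c = 1 ∨ ρ c = -1) → ξ c = 0) := by
  obtain ⟨g₀, h₀, hgh⟩ := hnonab
  have hgne : ∀ g : G, ρ g ≠ 0 := by
    intro g h0
    have := hρ g
    rw [h0, norm_zero] at this
    exact one_ne_zero this.symm
  have hcen : ∀ g : G, ρ c * ρ g = ρ g * ρ c := by
    intro g
    rw [← map_mul, ← map_mul, hc]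
  -- ρ c is real
  have hwim : (ρ c).imI = 0 ∧ (ρ c).imJ = 0 ∧ (ρ c).imK = 0 := by
    by_contra h
    have ha : (ρ c).imI ≠ 0 ∨ (ρ c).imJ ≠ 0 ∨ (ρ c).imK ≠ 0 := by tauto
    exact hgh (comm_of_comm (ρ c) (ρ g₀) (ρ h₀) ha (hcen g₀).symm (hcen h₀).symm)
  have hwre : ρ c = (((ρ c).re : ℝ) : Quaternion ℝ) := by
    ext <;> simp [hwim.1, hwim.2.1, hwim.2.2]
  have hcomm : ∀ x : Quaternion ℝ, ρ c * x = x * ρ c := by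
    intro x
    rw [hwre]
    exact Quaternion.coe_commutes _ x
  have part1 : ∀ g : G, ρ g * ξ c * (ρ g)⁻¹ = ξ c := by
    intro g
    have e1 := hcoc g c
    have e2 := hcoc c g
    rw [hc g] at e2
    rw [e1] at e2
    have e3 : ρ c * ξ g * (ρ c)⁻¹ = ξ g := by
      rw [hcomm (ξ g), mul_assoc, mul_inv_cancel₀ (hgne c), mul_one]
    rw [e3] at e2
    -- e2 : ξ g + ρ g * ξ c * (ρ g)⁻¹ = ξ c + ξ g
    have := e2.symm
    rw [add_comm (ξ c) (ξ g)] at this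
    exact (add_left_cancel this).symm
  refine ⟨part1, fun _ => ?_⟩
  by_contra hne
  have him : (ξ c).imI ≠ 0 ∨ (ξ c).imJ ≠ 0 ∨ (ξ c).imK ≠ 0 := by
    by_contra h
    push_neg at h
    apply hne
    ext <;> simp [hξim c, h.1, h.2.1, h.2.2] <;> rfl
  have hcm : ∀ g : G, ρ g * ξ c = ξ c * ρ g := by
    intro g
    have h1 := congrArg (· * ρ g) (part1 g)
    simpa [mul_assoc, inv_mul_cancel₀ (hgne g)] using h1
  exact hgh (comm_of_comm (ξ c) (ρ g₀) (ρ h₀) him (hcm g₀) (hcm h₀))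
end

section
/- Let p, q, r be pairwise coprime integers with 1 < |p| ≤ |q| ≤ |r|, with p and q both odd. Then there exist angles α₁ = π/|p|, α₂ = π/|q|, and α₃ = kπ/|r| for some integer k with 0 < kπ/|r| < π, such that the triangle inequality |α₁ − α₂| ≤ α₃ ≤ α₁ + α₂ holds. In particular, the closed interval [(|q|−|p|)/(|pq|), (|q|+|p|)/(|pq|)] of length 2/|q| contains at least one rational of the form k/|r| with 0 < k/|r| < 1. -/
open Real

/-- Let `p, q, r` be pairwise coprime integers with `1 < |p| ≤ |q| ≤ |r|`, with `p` and
`q` both odd.  Then for the angles `α₁ = π/|p|` and `α₂ = π/|q|` there is an angle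
`α₃ = kπ/|r|`, for some integer `k` with `0 < kπ/|r| < π`, satisfying the triangle
inequality `|α₁ − α₂| ≤ α₃ ≤ α₁ + α₂`. -/
theorem exists_triangle_angle_odd_case (p q r : ℤ)
    (hpq : IsCoprime p q) (hpr : IsCoprime p r) (hqr : IsCoprime q r)
    (hp : 1 < |p|) (hq : |p| ≤ |q|) (hr : |q| ≤ |r|)
    (hpodd : Odd p) (hqodd : Odd q) :
    ∃ k : ℤ, 0 < (k : ℝ) * π / abs (r : ℝ) ∧ (k : ℝ) * π / abs (r : ℝ) < π ∧
      abs (π / abs (p : ℝ) - π / abs (q : ℝ)) ≤ (k : ℝ) * π / abs (r : ℝ) ∧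
      (k : ℝ) * π / abs (r : ℝ) ≤ π / abs (p : ℝ) + π / abs (q : ℝ) := by
  -- |p| ≥ 3 since p is odd and |p| > 1
  have hpodd' : |p| % 2 = 1 := by
    have h := Int.odd_iff.mp hpodd
    rcases abs_cases p with ⟨h', _⟩ | ⟨h', _⟩ <;> omega
  have hqodd' : |q| % 2 = 1 := by
    have h := Int.odd_iff.mp hqodd
    rcases abs_cases q with ⟨h', _⟩ | ⟨h', _⟩ <;> omega
  have hp3 : (3:ℤ) ≤ |p| := by omega
  have hq3 : (3:ℤ) ≤ |q| := by omega
  have hr3 : (3:ℤ) ≤ |r| := le_trans hq3 hr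
  -- |p| < |q|
  have hpq' : |p| < |q| := by
    rcases lt_or_eq_of_le hq with h | h
    · exact h
    · exfalso
      have hdvd : p ∣ q := by
        rcases abs_eq_abs.mp h with h' | h'
        · exact ⟨1, by omega⟩
        · exact ⟨-1, by omega⟩
      have : IsUnit p := hpq.isUnit_of_dvd' dvd_rfl hdvd
      rcases Int.isUnit_iff.mp this with h' | h' <;> simp [h'] at hp
  -- real versions
  set P : ℝ := |(p:ℝ)| with hP
  set Q : ℝ := |(q:ℝ)| with hQ
  set R : ℝ := |(r:ℝ)| with hR
  have hPc : P = ((|p| : ℤ) : ℝ) := by push_cast [hP]; ring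
  have hQc : Q = ((|q| : ℤ) : ℝ) := by push_cast [hQ]; ring
  have hRc : R = ((|r| : ℤ) : ℝ) := by push_cast [hR]; ring
  have hP3 : (3:ℝ) ≤ P := by rw [hPc]; exact_mod_cast hp3
  have hQ3 : (3:ℝ) ≤ Q := by rw [hQc]; exact_mod_cast hq3
  have hR3 : (3:ℝ) ≤ R := by rw [hRc]; exact_mod_cast hr3
  have hPQ : P < Q := by rw [hPc, hQc]; exact_mod_cast hpq'
  have hQR : Q ≤ R := by rw [hQc, hRc]; exact_mod_cast hr
  have hP0 : (0:ℝ) < P := by linarith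
  have hQ0 : (0:ℝ) < Q := by linarith
  have hR0 : (0:ℝ) < R := by linarith
  have hπ : (0:ℝ) < π := Real.pi_pos
  -- the length of the interval
  set a : ℝ := 1/P - 1/Q with ha
  have ha0 : 0 < a := by
    have h : 1/Q < 1/P := one_div_lt_one_div_of_lt hP0 hPQ
    rw [ha]; linarith
  clear_value P Q R a
  have hkle : ((⌈R * a⌉ : ℤ) : ℝ) ≤ R * a + 1 := le_of_lt (Int.ceil_lt_add_one _)
  have hkge : R * a ≤ ((⌈R * a⌉ : ℤ) : ℝ) := Int.le_ceil _
  have hk1 : (1:ℝ) ≤ ((⌈R * a⌉ : ℤ) : ℝ) := by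
    exact_mod_cast Int.ceil_pos.mpr (mul_pos hR0 ha0)
  refine ⟨⌈R * a⌉, ?_, ?_, ?_, ?_⟩
  · -- 0 < kπ/R
    have : (0:ℝ) < (⌈R * a⌉ : ℝ) * π := mul_pos (by linarith) hπ
    exact div_pos this hR0
  · -- kπ/R < π :  k/R ≤ a + 1/R ≤ 1/P + 1/R ≤ 1/3 + 1/3 < 1
    rw [div_lt_iff₀ hR0]
    have h1 : (⌈R * a⌉ : ℝ) ≤ R * a + 1 := hkle
    have h2 : a < 1/P := by simp [ha]; positivity
    have h3 : 1/P ≤ 1/3 := by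
      rw [div_le_div_iff₀ hP0 (by norm_num)]; linarith
    have h4 : (1:ℝ)/R ≤ 1/3 := by
      rw [div_le_div_iff₀ hR0 (by norm_num)]; linarith
    have : (⌈R * a⌉ : ℝ) < R := by
      have : R * a + 1 < R := by
        have : a + 1/R < 1 := by
          have : a < 1/3 := lt_of_lt_of_le h2 h3
          linarith
        have := mul_lt_mul_of_pos_left this hR0
        rw [mul_add, mul_one_div, div_self (ne_of_gt hR0), mul_one] at this
        linarith
      linarith
    have := mul_lt_mul_of_pos_right this hπ
    linarith
  · -- |π/P - π/Q| ≤ kπ/R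
    rw [abs_of_nonneg (by
      have : 1/Q ≤ 1/P := le_of_lt (one_div_lt_one_div_of_lt hP0 hPQ)
      have : π * (1/Q) ≤ π * (1/P) := by nlinarith
      simp only [mul_one_div] at this
      linarith)]
    rw [le_div_iff₀ hR0]
    have : π/P - π/Q = π * a := by rw [ha]; ring
    rw [this]
    have h5 := mul_le_mul_of_nonneg_left hkge hπ.le
    nlinarith [h5]
  · -- kπ/R ≤ π/P + π/Q :  k/R ≤ a + 1/R ≤ a + 1/Q ≤ 1/P + 1/Q
    rw [div_le_iff₀ hR0]
    have h1 : (1:ℝ)/R ≤ 1/Q := by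
      rw [div_le_div_iff₀ hR0 hQ0]; nlinarith
    have hsum : π/P + π/Q = π * (a + 2/Q) := by rw [ha]; ring
    rw [hsum]
    have h2 : (1:ℝ) ≤ R / Q := (one_le_div hQ0).mpr hQR
    have hk : ((⌈R * a⌉ : ℤ) : ℝ) ≤ R * (a + 2/Q) := by
      have h3 : R * (a + 2/Q) = R * a + 2 * (R / Q) := by ring
      rw [h3]; linarith
    have h4 := mul_le_mul_of_nonneg_right hk hπ.le
    linarith
end

section
/- Let z₁ = j and z₂ = j·e^{iα} with α ∉ πℤ, and consider the linear map Φ : ℝ³ → z₁^⊥ ⊕ z₂^⊥ sending ζ ↦ ((1 − Ad_{z₁})ζ, (1 − Ad_{z₂})ζ), where su(2) ≅ ℝ³ with z₁, z₂ both perpendicular to i. Then Φ is injective with image exactly the set of pairs (λ, μ) with ⟨λ, i⟩ = ⟨μ, i⟩; in particular the image has dimension 3 inside the 4-dimensional space z₁^⊥ ⊕ z₂^⊥. -/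
/-- Let `z₁ = j` and `z₂ = j·e^{iα}` with `sin α ≠ 0` (i.e. `α ∉ πℤ`), both imaginary
unit quaternions perpendicular to `i`, and consider the linear map
`Φ : ℝ³ → z₁^⊥ ⊕ z₂^⊥`, `ζ ↦ ((1 − Ad_{z₁})ζ, (1 − Ad_{z₂})ζ)` on `su(2) ≅ ℝ³` (the
imaginary quaternions), where `Ad_z ζ = z ζ z⁻¹`.  Then `Φ` is injective, and its image
is exactly the set of pairs `(λ, μ)` (with `λ ⊥ z₁`, `μ ⊥ z₂`) satisfying
`⟨λ, i⟩ = ⟨μ, i⟩`; in particular the image is 3-dimensional inside the 4-dimensional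
space `z₁^⊥ ⊕ z₂^⊥`. -/
theorem coboundary_image_characterisation (α : ℝ) (hα : Real.sin α ≠ 0)
    (J eIα : Quaternion ℝ)
    (hJ : J.re = 0 ∧ J.imI = 0 ∧ J.imJ = 1 ∧ J.imK = 0)
    (heI : eIα.re = Real.cos α ∧ eIα.imI = Real.sin α ∧ eIα.imJ = 0 ∧ eIα.imK = 0) :
    (∀ ζ ζ' : Quaternion ℝ, ζ.re = 0 → ζ'.re = 0 →
        ζ - J * ζ * J⁻¹ = ζ' - J * ζ' * J⁻¹ →
        ζ - (J * eIα) * ζ * (J * eIα)⁻¹ = ζ' - (J * eIα) * ζ' * (J * eIα)⁻¹ →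
        ζ = ζ') ∧
    (∀ lam mu : Quaternion ℝ, lam.re = 0 → mu.re = 0 →
        (inner ℝ lam J : ℝ) = 0 → (inner ℝ mu (J * eIα) : ℝ) = 0 →
        ((∃ ζ : Quaternion ℝ, ζ.re = 0 ∧
            ζ - J * ζ * J⁻¹ = lam ∧
            ζ - (J * eIα) * ζ * (J * eIα)⁻¹ = mu) ↔ lam.imI = mu.imI)) := by
  obtain ⟨hJ0, hJ1, hJ2, hJ3⟩ := hJ
  obtain ⟨he0, he1, he2, he3⟩ := heI
  have hsc : Real.sin α ^ 2 + Real.cos α ^ 2 = 1 := Real.sin_sq_add_cos_sq α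
  set c := Real.cos α with hc
  set s := Real.sin α with hs
  set P := J * eIα with hPdef
  have hP0 : P.re = 0 := by
    simp [hPdef, Quaternion.re_mul, hJ0, hJ1, hJ2, hJ3, he0, he1, he2, he3]
  have hP1 : P.imI = 0 := by
    simp [hPdef, Quaternion.imI_mul, hJ0, hJ1, hJ2, hJ3, he0, he1, he2, he3]
  have hP2 : P.imJ = c := by
    simp [hPdef, Quaternion.imJ_mul, hJ0, hJ1, hJ2, hJ3, he0, he1, he2, he3]
  have hP3 : P.imK = -s := by
    simp [hPdef, Quaternion.imK_mul, hJ0, hJ1, hJ2, hJ3, he0, he1, he2, he3]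
  have hJinv : J⁻¹ = -J := by
    apply inv_eq_of_mul_eq_one_right
    ext <;>
      simp [Quaternion.re_mul, Quaternion.imI_mul, Quaternion.imJ_mul, Quaternion.imK_mul,
        hJ0, hJ1, hJ2, hJ3, Quaternion.re_one, Quaternion.imI_one, Quaternion.imJ_one, Quaternion.imK_one]
  have hPinv : P⁻¹ = -P := by
    apply inv_eq_of_mul_eq_one_right
    ext <;>
      simp [Quaternion.re_mul, Quaternion.imI_mul, Quaternion.imJ_mul, Quaternion.imK_mul,
        hP0, hP1, hP2, hP3, Quaternion.re_one, Quaternion.imI_one, Quaternion.imJ_one, Quaternion.imK_one] <;> nlinarith [hsc]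
  have hs2 : (2 * s ^ 2 : ℝ) ≠ 0 := by positivity
  constructor
  · intro ζ ζ' hz hz' h1 h2
    rw [hJinv] at h1
    rw [hPinv] at h2
    have e1I := congrArg QuaternionAlgebra.imI h1
    have e1K := congrArg QuaternionAlgebra.imK h1
    have e2J := congrArg QuaternionAlgebra.imJ h2
    simp only [Quaternion.imI_sub, Quaternion.imK_sub, Quaternion.imJ_sub,
      Quaternion.re_mul, Quaternion.imI_mul, Quaternion.imJ_mul, Quaternion.imK_mul,
      Quaternion.re_neg, Quaternion.imI_neg, Quaternion.imJ_neg,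
      Quaternion.imK_neg, hJ0, hJ1, hJ2, hJ3, hP0, hP1, hP2, hP3, hz, hz'] at e1I e1K e2J
    ring_nf at e1I e1K e2J
    ext
    · rw [hz, hz']
    · linarith
    · have kk : ζ.imK = ζ'.imK := by linarith
      have h : 2 * s ^ 2 * ζ.imJ = 2 * s ^ 2 * ζ'.imJ := by
        linear_combination e2J - 2 * c * s * kk + (ζ.imJ - ζ'.imJ) * hsc
      exact mul_left_cancel₀ hs2 h
    · linarith
  · intro lam mu hl hm hil him
    rw [Quaternion.inner_def] at hil him
    simp only [Quaternion.re_mul, Quaternion.re_star, Quaternion.imI_star,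
      Quaternion.imJ_star, Quaternion.imK_star, hJ0, hJ1, hJ2, hJ3, hP0, hP1, hP2, hP3,
      hl, hm] at hil him
    ring_nf at hil him
    constructor
    · rintro ⟨ζ, hz, h1, h2⟩
      have e1 := congrArg QuaternionAlgebra.imI h1
      have e2 := congrArg QuaternionAlgebra.imI h2
      rw [hJinv] at e1
      rw [hPinv] at e2
      simp only [Quaternion.imI_sub, Quaternion.re_mul, Quaternion.imI_mul,
        Quaternion.imJ_mul, Quaternion.imK_mul,
        Quaternion.re_neg, Quaternion.imI_neg, Quaternion.imJ_neg, Quaternion.imK_neg,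
        hJ0, hJ1, hJ2, hJ3, hP0, hP1, hP2, hP3, hz] at e1 e2
      linear_combination e2 - e1 - ζ.imI * hsc
    · intro hIm
      set y : ℝ := (mu.imJ - lam.imK * s * c) / (2 * s ^ 2) with hy0
      have hy : 2 * s ^ 2 * y = mu.imJ - lam.imK * s * c := by
        rw [hy0]; field_simp
      refine ⟨@id (Quaternion ℝ) ⟨0, lam.imI / 2, y, lam.imK / 2⟩, rfl, ?_, ?_⟩
      · rw [hJinv]
        ext <;>
          simp only [Quaternion.re_sub, Quaternion.imI_sub, Quaternion.imJ_sub,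
            Quaternion.imK_sub, Quaternion.re_mul, Quaternion.imI_mul, Quaternion.imJ_mul,
            Quaternion.imK_mul, Quaternion.re_neg, Quaternion.imI_neg, Quaternion.imJ_neg,
            Quaternion.imK_neg, hJ0, hJ1, hJ2, hJ3] <;>
          dsimp only [id]
        · linear_combination -hl
        · ring
        · linear_combination -hil
        · ring
      · rw [hPinv]
        ext <;>
          simp only [Quaternion.re_sub, Quaternion.imI_sub, Quaternion.imJ_sub,
            Quaternion.imK_sub, Quaternion.re_mul, Quaternion.imI_mul, Quaternion.imJ_mul,
            Quaternion.imK_mul, Quaternion.re_neg, Quaternion.imI_neg, Quaternion.imJ_neg,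
            Quaternion.imK_neg, hP0, hP1, hP2, hP3] <;>
          dsimp only [id]
        · linear_combination -hm
        · linear_combination hIm + (lam.imI / 2) * hsc
        · linear_combination hy - y * hsc
        · apply mul_left_cancel₀ hα
          linear_combination c * hy + him - (s * lam.imK / 2) * hsc
end
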